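/- Fix d ≥ 1 and λ, ν ∈ W^d with |λ| ≥ |ν|, and set u_d(λ;ν;n) = Σ_{μ ∈ W^d, |μ| = n + |λ|} f(λ;μ)·f(ν;μ). Then Σ_{n≥0} u_d(λ;ν;n) t^{2n+|λ|−|ν|} / ( n!·(n+|λ|−|ν|)! ) = det( I_{λ_i − ν_j}(2t) )_{1≤i,j≤d} as formal power series in t over ℚ; equivalently, for every n ≥ 0, u_d(λ;ν;n) equals n!·(n+|λ|−|ν|)! times the coefficient of t^{2n+|λ|−|ν|} in that determinant, and every coefficient of t^m with m not of the form 2n+|λ|−|ν| vanishes. -/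

import Mathlib

open scoped BigOperators

/-- The `d`-dimensional Weyl chamber `W^d = {x ∈ ℤ^d : x₁ > x₂ > ⋯ > x_d > 0}`. -/
def WeylChamber (d : ℕ) : Set (Fin d → ℤ) :=
  {x | (∀ i j : Fin d, i < j → x j < x i) ∧ ∀ i, 0 < x i}

/-- `q` is obtained from `p` by adding a positive unit coordinate vector. -/
def IsPosStep {d : ℕ} (p q : Fin d → ℤ) : Prop :=
  ∃ i : Fin d, q = p + Pi.single i 1

/-- A walk of length `n` starting at `lam`, staying in the Weyl chamber `W^d`, all of
whose steps are positive unit coordinate vectors. -/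
def IsPosWalk (d n : ℕ) (lam : Fin d → ℤ) (p : Fin (n + 1) → (Fin d → ℤ)) : Prop :=
  p 0 = lam ∧ (∀ k, p k ∈ WeylChamber d) ∧
    ∀ k : Fin n, IsPosStep (p k.castSucc) (p k.succ)

/-- The hyperbolic Bessel function of the first kind `I_s(2t)`, as a formal power
series in `t` over `ℚ`:  `I_s(2t) = Σ_{k,m ≥ 0, m - k = s} t^{m+k}/(m! k!)`,
i.e. the coefficient of `z^s` in `exp(t(z + z⁻¹))`. -/
noncomputable def besselI (s : ℤ) : PowerSeries ℚ :=
  PowerSeries.mk fun n =>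
    ∑ k ∈ Finset.range (n + 1),
      if ((n - k : ℕ) : ℤ) - (k : ℤ) = s then
        (1 : ℚ) / ((n - k).factorial * k.factorial) else 0

/-- `u_d(λ;ν;n) = Σ_{μ ∈ W^d, |μ| = n + |λ|} f(λ;μ)·f(ν;μ)`: the number of pairs
consisting of a walk of length `n` from `lam` and a walk of length `n + (|λ| - |ν|)`
from `nu` (positive unit coordinate steps, staying in `W^d`) with the same endpoint. -/
noncomputable def uPairCount₂ (d : ℕ) (lam nu : Fin d → ℤ) (n : ℕ) : ℕ :=
  Nat.card {pq : (Fin (n + 1) → (Fin d → ℤ)) ×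
      (Fin (n + ((∑ i, lam i) - ∑ i, nu i).toNat + 1) → (Fin d → ℤ)) //
    IsPosWalk d n lam pq.1 ∧
      IsPosWalk d (n + ((∑ i, lam i) - ∑ i, nu i).toNat) nu pq.2 ∧
      pq.1 (Fin.last n) = pq.2 (Fin.last (n + ((∑ i, lam i) - ∑ i, nu i).toNat))}


noncomputable def ifact (z : ℤ) : ℚ := if 0 ≤ z then ((z.toNat).factorial : ℚ)⁻¹ else 0

lemma ifact_of_neg {z : ℤ} (h : z < 0) : ifact z = 0 := by
  simp [ifact, not_le.2 h]

lemma ifact_zero : ifact 0 = 1 := by simp [ifact]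

lemma ifact_natCast (k : ℕ) : ifact (k : ℤ) = ((k.factorial : ℚ))⁻¹ := by
  simp [ifact]

lemma ifact_pred (z : ℤ) : ifact (z - 1) = z * ifact z := by
  rcases lt_trichotomy z 0 with h | h | h
  · rw [ifact_of_neg h, ifact_of_neg (by omega), mul_zero]
  · subst h; rw [ifact_of_neg (by omega), Int.cast_zero, zero_mul]
  · have h1 : (0:ℤ) ≤ z - 1 := by omega
    have h2 : z.toNat = (z - 1).toNat + 1 := by omega
    have h3 : (((z - 1).toNat : ℚ) + 1) = (z : ℚ) := by
      have h4 : ((z-1).toNat : ℤ) = z - 1 := Int.toNat_of_nonneg h1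
      have h5 : ((z-1).toNat : ℚ) = ((z : ℚ) - 1) := by exact_mod_cast congrArg (Int.cast : ℤ → ℚ) h4
      rw [h5]; ring
    have hzq : (z : ℚ) ≠ 0 := by positivity
    have hfac : ((z.toNat.factorial : ℚ)) = (z:ℚ) * ((z-1).toNat.factorial : ℚ) := by
      rw [h2, Nat.factorial_succ]; push_cast; rw [h3]
    rw [ifact, ifact, if_pos h1, if_pos (le_of_lt h), hfac, mul_inv]
    field_simp

/-- Strictly decreasing tuple. -/
def SDec {d : ℕ} (x : Fin d → ℤ) : Prop := ∀ i j : Fin d, i < j → x j < x i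

lemma SDec.anti {d : ℕ} {x : Fin d → ℤ} (h : SDec x) {i j : Fin d} (hij : i ≤ j) :
    x j ≤ x i := by
  rcases eq_or_lt_of_le hij with rfl | hlt
  · exact le_rfl
  · exact (h i j hlt).le

lemma SDec.injective {d : ℕ} {x : Fin d → ℤ} (h : SDec x) : Function.Injective x := by
  intro i j hij
  rcases lt_trichotomy i j with hlt | he | hlt
  · exact absurd hij (by have := h i j hlt; omega)
  · exact he
  · exact absurd hij (by have := h j i hlt; omega)

noncomputable def hdet (d : ℕ) (a μ : Fin d → ℤ) : ℚ :=
  Matrix.det (Matrix.of fun i j : Fin d => ifact (μ i - a j))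

lemma hdet_self {d : ℕ} {a : Fin d → ℤ} (ha : SDec a) : hdet d a a = 1 := by
  have htri : Matrix.BlockTriangular (Matrix.of fun i j : Fin d => ifact (a i - a j)) id := by
    intro i j hij
    exact ifact_of_neg (by simpa using sub_neg.2 (ha j i hij))
  rw [hdet, Matrix.det_of_upperTriangular htri]
  simp [ifact_zero]

lemma hdet_block_zero {d : ℕ} {a μ : Fin d → ℤ} (ha : SDec a) (hμ : SDec μ)
    (h : ∃ i, μ i < a i) : hdet d a μ = 0 := by
  obtain ⟨i, hi⟩ := h
  rw [hdet, Matrix.det_apply']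
  refine Finset.sum_eq_zero fun σ _ => ?_
  have hex : ∃ c : Fin d, c ≤ i ∧ i ≤ σ c := by
    by_contra hcon
    push_neg at hcon
    have hmaps : ∀ c ∈ Finset.Iic i, σ c ∈ Finset.Iio i := fun c hc =>
      Finset.mem_Iio.2 (hcon c (Finset.mem_Iic.1 hc))
    have hinj : Set.InjOn σ (Finset.Iic i) := fun x _ y _ h => σ.injective h
    have hcard := Finset.card_le_card_of_injOn σ hmaps hinj
    rw [Fin.card_Iic, Fin.card_Iio] at hcard
    omega
  obtain ⟨c, hci, hic⟩ := hex
  have hz : (Matrix.of fun r j : Fin d => ifact (μ r - a j)) (σ c) c = 0 := by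
    show ifact (μ (σ c) - a c) = 0
    apply ifact_of_neg
    have h1 : μ (σ c) ≤ μ i := hμ.anti hic
    have h2 : a i ≤ a c := ha.anti hci
    omega
  exact mul_eq_zero_of_right _ (Finset.prod_eq_zero (Finset.mem_univ c) hz)

lemma hdet_row_eq {d : ℕ} {a μ : Fin d → ℤ} {k l : Fin d} (hkl : k ≠ l) (h : μ k = μ l) :
    hdet d a μ = 0 := by
  apply Matrix.det_zero_of_row_eq hkl
  funext j
  simp [Matrix.of_apply, h]

lemma hdet_row_zero {d : ℕ} {a μ : Fin d → ℤ} {k : Fin d} (ha : ∀ j, 0 < a j) (h : μ k ≤ 0) :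
    hdet d a μ = 0 := by
  apply Matrix.det_eq_zero_of_row_eq_zero k
  intro j
  exact ifact_of_neg (by have := ha j; omega)

lemma hdet_rec {d : ℕ} (a μ : Fin d → ℤ) :
    ∑ i : Fin d, hdet d a (μ - Pi.single i (1:ℤ)) =
      (((∑ i, μ i) - ∑ i, a i : ℤ) : ℚ) * hdet d a μ := by
  have key : ∀ i : Fin d,
      hdet d a (μ - Pi.single i (1:ℤ)) =
        ∑ σ : Equiv.Perm (Fin d), ((Equiv.Perm.sign σ : ℤ) : ℚ) *
          (((μ i - a (σ.symm i) : ℤ) : ℚ) * ∏ c : Fin d, ifact (μ (σ c) - a c)) := by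
    intro i
    rw [hdet, Matrix.det_apply']
    refine Finset.sum_congr rfl fun σ _ => ?_
    congr 1
    have hrow : ∀ c : Fin d,
        (Matrix.of fun r j : Fin d => ifact (((μ - Pi.single i (1:ℤ) : Fin d → ℤ)) r - a j)) (σ c) c
        = Function.update (fun c => ifact (μ (σ c) - a c)) (σ.symm i)
            (ifact (μ i - 1 - a (σ.symm i))) c := by
      intro c
      rw [Function.update_apply]
      by_cases hc : c = σ.symm i
      · subst hc
        rw [if_pos rfl]
        show ifact (((μ - Pi.single i (1:ℤ) : Fin d → ℤ)) (σ (σ.symm i)) - a (σ.symm i)) = _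
        rw [Equiv.apply_symm_apply]
        congr 1
        simp [Pi.sub_apply, Pi.single_apply]
      · rw [if_neg hc]
        show ifact (((μ - Pi.single i (1:ℤ) : Fin d → ℤ)) (σ c) - a c) = _
        have hne : σ c ≠ i := fun hh => hc (by rw [← hh, Equiv.symm_apply_apply])
        congr 1
        simp [Pi.sub_apply, Pi.single_apply, hne]
    rw [Finset.prod_congr rfl fun c _ => hrow c,
      Finset.prod_update_of_mem (Finset.mem_univ _)]
    have hstep : ifact (μ i - 1 - a (σ.symm i))
        = ((μ i - a (σ.symm i) : ℤ) : ℚ) * ifact (μ i - a (σ.symm i)) := by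
      have := ifact_pred (μ i - a (σ.symm i))
      rw [← this]
      congr 1
      ring
    rw [hstep]
    have hσ : μ (σ (σ.symm i)) = μ i := by rw [Equiv.apply_symm_apply]
    rw [mul_assoc]
    congr 1
    rw [← Finset.prod_erase_mul Finset.univ _ (Finset.mem_univ (σ.symm i)), hσ,
      ← Finset.sdiff_singleton_eq_erase]
    ring
  rw [Finset.sum_congr rfl fun i _ => key i, Finset.sum_comm, hdet, Matrix.det_apply',
    Finset.mul_sum]
  simp only [Matrix.of_apply]
  refine Finset.sum_congr rfl fun σ _ => ?_
  rw [← Finset.mul_sum, ← Finset.sum_mul]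
  have hsum : ∑ i : Fin d, ((μ i - a (σ.symm i) : ℤ) : ℚ)
      = (((∑ i, μ i) - ∑ i, a i : ℤ) : ℚ) := by
    push_cast
    rw [Finset.sum_sub_distrib]
    congr 1
    exact (Equiv.sum_comp σ.symm (fun i => (a i : ℚ)))
  rw [hsum]
  ring


def WalkSp (d n : ℕ) (lam mu : Fin d → ℤ) : Type :=
  {p : Fin (n + 1) → Fin d → ℤ // IsPosWalk d n lam p ∧ p (Fin.last n) = mu}

section Walks

variable {d : ℕ} {lam mu : Fin d → ℤ}

instance walk0_subsingleton (d : ℕ) (lam mu : Fin d → ℤ) :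
    Subsingleton (WalkSp d 0 lam mu) := by
  constructor
  rintro ⟨p, ⟨h0, -, -⟩, -⟩ ⟨q, ⟨h0', -, -⟩, -⟩
  apply Subtype.ext
  funext k
  show p k = q k
  have hk : k = 0 := Fin.ext (by omega)
  rw [hk, h0, h0']

lemma walk0_card_self (hlam : lam ∈ WeylChamber d) :
    Nat.card (WalkSp d 0 lam lam) = 1 := by
  have hne : Nonempty (WalkSp d 0 lam lam) :=
    ⟨⟨fun _ => lam, ⟨rfl, fun _ => hlam, fun k => k.elim0⟩, rfl⟩⟩
  exact Nat.card_eq_one_iff_unique.2 ⟨walk0_subsingleton d lam lam, hne⟩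

lemma walk0_card_ne (h : mu ≠ lam) : Nat.card (WalkSp d 0 lam mu) = 0 := by
  have : IsEmpty (WalkSp d 0 lam mu) := by
    constructor
    rintro ⟨p, ⟨h0, -, -⟩, hl⟩
    exact h (by rw [← hl, show Fin.last 0 = 0 from rfl, h0])
  exact Nat.card_of_isEmpty

lemma walk_isEmpty (n : ℕ) (h : mu ∉ WeylChamber d) : IsEmpty (WalkSp d n lam mu) := by
  constructor
  rintro ⟨p, ⟨-, hW, -⟩, hl⟩
  exact h (hl ▸ hW (Fin.last n))

lemma walk_card_notmem (n : ℕ) (h : mu ∉ WeylChamber d) :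
    Nat.card (WalkSp d n lam mu) = 0 := by
  haveI := walk_isEmpty (lam := lam) n h
  exact Nat.card_of_isEmpty

def snocWalk {n : ℕ} (hmu : mu ∈ WeylChamber d) :
    (Σ i : Fin d, WalkSp d n lam (mu - Pi.single i (1:ℤ))) → WalkSp d (n + 1) lam mu :=
  fun w => ⟨Fin.snoc w.2.1 mu, by
    obtain ⟨⟨h0, hW, hs⟩, hend⟩ := w.2.2
    refine ⟨⟨?_, ?_, ?_⟩, ?_⟩
    · show Fin.snoc (α := fun _ : Fin (n+2) => Fin d → ℤ) w.2.1 mu 0 = lam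
      rw [show (0 : Fin (n+2)) = Fin.castSucc 0 from rfl, Fin.snoc_castSucc, h0]
    · intro k
      refine Fin.lastCases ?_ ?_ k
      · rw [Fin.snoc_last]; exact hmu
      · intro j; rw [Fin.snoc_castSucc]; exact hW j
    · intro k
      refine Fin.lastCases ?_ ?_ k
      · show IsPosStep (Fin.snoc (α := fun _ : Fin (n+2) => Fin d → ℤ) w.2.1 mu (Fin.castSucc (Fin.last n)))
          (Fin.snoc (α := fun _ : Fin (n+2) => Fin d → ℤ) w.2.1 mu (Fin.last n).succ)
        rw [Fin.succ_last, Fin.snoc_last, Fin.snoc_castSucc, hend]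
        exact ⟨w.1, by rw [sub_add_cancel]⟩
      · intro j
        show IsPosStep (Fin.snoc (α := fun _ : Fin (n+2) => Fin d → ℤ) w.2.1 mu (Fin.castSucc j).castSucc)
          (Fin.snoc (α := fun _ : Fin (n+2) => Fin d → ℤ) w.2.1 mu (Fin.castSucc j).succ)
        rw [Fin.succ_castSucc, Fin.snoc_castSucc, Fin.snoc_castSucc]
        exact hs j
    · rw [Fin.snoc_last]⟩

lemma snocWalk_bijective {n : ℕ} (hmu : mu ∈ WeylChamber d) :
    Function.Bijective (snocWalk (lam := lam) (n := n) hmu) := by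
  constructor
  · rintro ⟨i, p, hp⟩ ⟨i', p', hp'⟩ h
    have hpq : Fin.snoc (α := fun _ : Fin (n+2) => Fin d → ℤ) p mu = Fin.snoc p' mu :=
      congrArg Subtype.val h
    have hpp' : p = p' := by
      funext k
      have := congrFun hpq (Fin.castSucc k)
      rwa [Fin.snoc_castSucc, Fin.snoc_castSucc] at this
    subst hpp'
    have h1 : mu - Pi.single i (1:ℤ) = mu - Pi.single i' (1:ℤ) := hp.2.symm.trans hp'.2
    have hii' : i = i' := by
      by_contra hne
      have h3 := congrFun h1 i
      rw [Pi.sub_apply, Pi.sub_apply, Pi.single_eq_same,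
        Pi.single_eq_of_ne hne] at h3
      omega
    subst hii'
    rfl
  · rintro ⟨P, ⟨h0, hW, hs⟩, hend⟩
    obtain ⟨i, hi⟩ := hs (Fin.last n)
    rw [Fin.succ_last, hend] at hi
    refine ⟨⟨i, ⟨Fin.init P, ⟨?_, ?_, ?_⟩, ?_⟩⟩, ?_⟩
    · show P (Fin.castSucc 0) = lam
      rw [show Fin.castSucc (0 : Fin (n+1)) = 0 from rfl, h0]
    · intro k; exact hW _
    · intro k
      show IsPosStep (P (Fin.castSucc k).castSucc) (P (Fin.castSucc (Fin.succ k)))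
      rw [← Fin.succ_castSucc]
      exact hs (Fin.castSucc k)
    · show P (Fin.castSucc (Fin.last n)) = mu - Pi.single i 1
      exact eq_sub_of_add_eq hi.symm
    · apply Subtype.ext
      show Fin.snoc (Fin.init P) mu = P
      rw [← hend, Fin.snoc_init_self]

lemma walk_finite (lam : Fin d → ℤ) : ∀ (n : ℕ) (mu : Fin d → ℤ), Finite (WalkSp d n lam mu) := by
  intro n
  induction n with
  | zero => intro mu; exact Finite.of_subsingleton
  | succ n ih =>
    intro mu
    by_cases hmu : mu ∈ WeylChamber d
    · haveI : ∀ i : Fin d, Finite (WalkSp d n lam (mu - Pi.single i (1:ℤ))) := fun i => ih _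
      exact Finite.of_surjective _ (snocWalk_bijective hmu).2
    · haveI := walk_isEmpty (lam := lam) (n + 1) hmu
      exact Finite.of_subsingleton

lemma walk_card_succ {n : ℕ} (hmu : mu ∈ WeylChamber d) :
    Nat.card (WalkSp d (n + 1) lam mu)
      = ∑ i : Fin d, Nat.card (WalkSp d n lam (mu - Pi.single i (1:ℤ))) := by
  haveI : ∀ i : Fin d, Finite (WalkSp d n lam (mu - Pi.single i (1:ℤ))) :=
    fun i => walk_finite lam n _
  haveI : ∀ i : Fin d, Fintype (WalkSp d n lam (mu - Pi.single i (1:ℤ))) :=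
    fun i => Fintype.ofFinite _
  have e := Nat.card_eq_of_bijective _ (snocWalk_bijective (lam := lam) (n := n) hmu)
  rw [← e, Nat.card_eq_fintype_card, Fintype.card_sigma]
  exact Finset.sum_congr rfl fun i _ => (Nat.card_eq_fintype_card).symm

lemma walk_facts {n : ℕ} (w : WalkSp d n lam mu) :
    mu ∈ WeylChamber d ∧ (∑ i, mu i) = (∑ i, lam i) + n ∧ ∀ j, lam j ≤ mu j := by
  obtain ⟨p, ⟨h0, hW, hs⟩, hend⟩ := w
  have key : ∀ k : Fin (n + 1), (∑ i, p k i) = (∑ i, lam i) + k ∧ ∀ j, lam j ≤ p k j := by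
    intro k
    induction k using Fin.induction with
    | zero => simp [h0]
    | succ j ih =>
      obtain ⟨i, hi⟩ := hs j
      constructor
      · have hs1 : (∑ x, ((p (Fin.castSucc j) + Pi.single i (1:ℤ) : Fin d → ℤ)) x)
            = (∑ x, p (Fin.castSucc j) x) + 1 := by
          simp [Pi.add_apply, Finset.sum_add_distrib, Pi.single_apply]
        rw [hi, hs1, ih.1]
        push_cast [Fin.val_succ, Fin.coe_castSucc]
        ring
      · intro j'
        rw [hi]
        have h1 : (0:ℤ) ≤ (Pi.single i (1:ℤ) : Fin d → ℤ) j' := by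
          rcases eq_or_ne j' i with rfl | hne
          · simp
          · simp [Pi.single_eq_of_ne hne]
        have := ih.2 j'
        simp only [Pi.add_apply]
        omega
  refine ⟨hend ▸ hW (Fin.last n), ?_, ?_⟩
  · have := (key (Fin.last n)).1
    rw [hend] at this
    simpa using this
  · intro j
    have := (key (Fin.last n)).2 j
    rwa [hend] at this

lemma walk_nonempty_of_card_ne_zero {n : ℕ} (h : Nat.card (WalkSp d n lam mu) ≠ 0) :
    Nonempty (WalkSp d n lam mu) := by
  by_contra hne
  rw [not_nonempty_iff] at hne
  exact h Nat.card_of_isEmpty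

end Walks

section Main

variable {d : ℕ}

lemma mem_weyl_iff {x : Fin d → ℤ} : x ∈ WeylChamber d ↔ SDec x ∧ ∀ i, 0 < x i := Iff.rfl

lemma hdet_step_zero {lam mu : Fin d → ℤ} (hlampos : ∀ j, 0 < lam j)
    (hmu : mu ∈ WeylChamber d) (i : Fin d) (h : mu - Pi.single i (1:ℤ) ∉ WeylChamber d) :
    hdet d lam (mu - Pi.single i (1:ℤ)) = 0 := by
  by_cases hpos : ∀ k, 0 < (mu - Pi.single i (1:ℤ) : Fin d → ℤ) k
  · have hord : ¬ ∀ k l : Fin d, k < l →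
        (mu - Pi.single i (1:ℤ) : Fin d → ℤ) l < (mu - Pi.single i (1:ℤ) : Fin d → ℤ) k := by
      intro hord; exact h ⟨hord, hpos⟩
    push_neg at hord
    obtain ⟨k, l, hkl, hge⟩ := hord
    have hkl' : mu l < mu k := hmu.1 k l hkl
    have hklne : k ≠ l := ne_of_lt hkl
    apply hdet_row_eq hklne
    have e1 : (mu - Pi.single i (1:ℤ) : Fin d → ℤ) k = mu k - (if k = i then 1 else 0) := by
      simp [Pi.sub_apply, Pi.single_apply]
    have e2 : (mu - Pi.single i (1:ℤ) : Fin d → ℤ) l = mu l - (if l = i then 1 else 0) := by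
      simp [Pi.sub_apply, Pi.single_apply]
    rcases eq_or_ne k i with rfl | hki
    · rcases eq_or_ne l k with rfl | hli
      · exact absurd rfl hklne
      · rw [e1, e2, if_pos rfl, if_neg (by exact fun hh => hli (hh.trans rfl))]
        rw [e1, e2, if_pos rfl, if_neg (by exact fun hh => hli (hh.trans rfl))] at hge
        omega
    · rw [e1, if_neg hki] at hge ⊢
      rw [e2] at hge ⊢
      have : (if l = i then (1:ℤ) else 0) ≤ 1 ∧ (0:ℤ) ≤ (if l = i then (1:ℤ) else 0) := by
        split <;> omega
      omega
  · push_neg at hpos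
    obtain ⟨k, hk⟩ := hpos
    exact hdet_row_zero hlampos (show (mu - Pi.single i (1:ℤ) : Fin d → ℤ) k ≤ 0 by omega)

lemma walk_card_eq_hdet {lam : Fin d → ℤ} (hlam : lam ∈ WeylChamber d) :
    ∀ (n : ℕ) (mu : Fin d → ℤ), mu ∈ WeylChamber d → (∑ i, mu i) = (∑ i, lam i) + n →
      (Nat.card (WalkSp d n lam mu) : ℚ) = (n.factorial : ℚ) * hdet d lam mu := by
  intro n
  induction n with
  | zero =>
    intro mu hmu hsum
    rcases eq_or_ne mu lam with rfl | hne
    · rw [walk0_card_self hmu, hdet_self (show SDec mu from hmu.1)]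
      norm_num
    · rw [walk0_card_ne hne]
      have hblock : ∃ i, mu i < lam i := by
        by_contra hcon
        push_neg at hcon
        obtain ⟨j, hj⟩ := Function.ne_iff.1 hne
        have hjlt : lam j < mu j := lt_of_le_of_ne (hcon j) (Ne.symm hj)
        have hlt : (∑ i, lam i) < ∑ i, mu i :=
          Finset.sum_lt_sum (fun i _ => hcon i) ⟨j, Finset.mem_univ j, hjlt⟩
        simp at hsum
        omega
      rw [hdet_block_zero (show SDec lam from hlam.1) (show SDec mu from hmu.1) hblock]
      norm_num
  | succ n ih =>
    intro mu hmu hsum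
    rw [walk_card_succ hmu]
    push_cast
    have hterm : ∀ i : Fin d, (Nat.card (WalkSp d n lam (mu - Pi.single i (1:ℤ))) : ℚ)
        = (n.factorial : ℚ) * hdet d lam (mu - Pi.single i (1:ℤ)) := by
      intro i
      by_cases hin : mu - Pi.single i (1:ℤ) ∈ WeylChamber d
      · apply ih _ hin
        have hs1 : (∑ k, (mu - Pi.single i (1:ℤ) : Fin d → ℤ) k) = (∑ k, mu k) - 1 := by
          simp [Pi.sub_apply, Finset.sum_sub_distrib, Pi.single_apply]
        rw [hs1, hsum]
        push_cast
        ring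
      · rw [walk_card_notmem _ hin, hdet_step_zero (fun j => hlam.2 j) hmu i hin]
        norm_num
    rw [Finset.sum_congr rfl fun i _ => hterm i, ← Finset.mul_sum, hdet_rec]
    have hc : ((∑ i, mu i) - ∑ i, lam i : ℤ) = ((n:ℤ) + 1) := by
      push_cast at hsum
      omega
    rw [hc]
    push_cast [Nat.factorial_succ]
    ring

def PairSp (d n m : ℕ) (lam nu : Fin d → ℤ) : Type :=
  {pq : (Fin (n + 1) → (Fin d → ℤ)) × (Fin (m + 1) → (Fin d → ℤ)) //
    IsPosWalk d n lam pq.1 ∧ IsPosWalk d m nu pq.2 ∧ pq.1 (Fin.last n) = pq.2 (Fin.last m)}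

def pairF (d n m : ℕ) (lam nu : Fin d → ℤ) (B : Finset (Fin d → ℤ)) :
    (Σ μ : {x // x ∈ B}, WalkSp d n lam μ.1 × WalkSp d m nu μ.1) → PairSp d n m lam nu :=
  fun z => ⟨(z.2.1.1, z.2.2.1), z.2.1.2.1, z.2.2.2.1, z.2.1.2.2.trans z.2.2.2.2.symm⟩

lemma pair_card_eq (n m : ℕ) (lam nu : Fin d → ℤ) :
    Nat.card (PairSp d n m lam nu)
      = ∑ μ ∈ Fintype.piFinset (fun i => Finset.Icc (lam i) (lam i + n)),
          Nat.card (WalkSp d n lam μ) * Nat.card (WalkSp d m nu μ) := by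
  classical
  set B := Fintype.piFinset (fun i => Finset.Icc (lam i) (lam i + (n:ℤ))) with hBdef
  have hFbij : Function.Bijective (pairF d n m lam nu B) := by
    constructor
    · rintro ⟨⟨μ, hμ⟩, ⟨⟨p, hp⟩, ⟨q, hq⟩⟩⟩ ⟨⟨μ', hμ'⟩, ⟨⟨p', hp'⟩, ⟨q', hq'⟩⟩⟩ h
      have hval := congrArg Subtype.val h
      have hp1 : p = p' := congrArg Prod.fst hval
      have hq1 : q = q' := congrArg Prod.snd hval
      subst hp1; subst hq1
      have hμμ : μ = μ' := hp.2.symm.trans hp'.2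
      subst hμμ
      rfl
    · rintro ⟨⟨p, q⟩, hp, hq, he⟩
      have hw : IsPosWalk d n lam p ∧ p (Fin.last n) = p (Fin.last n) := ⟨hp, rfl⟩
      have hfacts := walk_facts (⟨p, hw⟩ : WalkSp d n lam (p (Fin.last n)))
      have hμB : p (Fin.last n) ∈ B := by
        rw [hBdef, Fintype.mem_piFinset]
        intro j
        rw [Finset.mem_Icc]
        refine ⟨hfacts.2.2 j, ?_⟩
        have hsingle : p (Fin.last n) j - lam j ≤ ∑ i, (p (Fin.last n) i - lam i) := by
          apply Finset.single_le_sum (f := fun i => p (Fin.last n) i - lam i)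
          · intro i _
            have := hfacts.2.2 i
            omega
          · exact Finset.mem_univ j
        rw [Finset.sum_sub_distrib] at hsingle
        have := hfacts.2.1
        omega
      exact ⟨⟨⟨p (Fin.last n), hμB⟩, ⟨⟨p, hp, rfl⟩, ⟨q, hq, he.symm⟩⟩⟩, Subtype.ext rfl⟩
  haveI : ∀ μ : {x // x ∈ B}, Finite (WalkSp d n lam μ.1) := fun μ => walk_finite lam n _
  haveI : ∀ μ : {x // x ∈ B}, Finite (WalkSp d m nu μ.1) := fun μ => walk_finite nu m _
  haveI hf1 : ∀ μ : {x // x ∈ B}, Fintype (WalkSp d n lam μ.1) := fun μ => Fintype.ofFinite _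
  haveI hf2 : ∀ μ : {x // x ∈ B}, Fintype (WalkSp d m nu μ.1) := fun μ => Fintype.ofFinite _
  have e := Nat.card_eq_of_bijective _ hFbij
  rw [← e, Nat.card_eq_fintype_card, Fintype.card_sigma]
  rw [← Finset.sum_coe_sort B (fun μ => Nat.card (WalkSp d n lam μ) * Nat.card (WalkSp d m nu μ))]
  refine Finset.sum_congr rfl fun μ _ => ?_
  rw [Fintype.card_prod, Nat.card_eq_fintype_card, Nat.card_eq_fintype_card]

end Main


section Series

open PowerSeries

variable {d : ℕ}

lemma monomial_mul_monomial' (a b : ℕ) (c e : ℚ) :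
    (monomial (R := ℚ) a c) * (monomial (R := ℚ) b e) = monomial (R := ℚ) (a + b) (c * e) := by
  have := MvPowerSeries.monomial_mul_monomial (σ := Unit) (R := ℚ)
    (Finsupp.single () a) (Finsupp.single () b) c e
  rw [← Finsupp.single_add] at this
  exact this

noncomputable def psi (a x : ℤ) : PowerSeries ℚ := monomial (R := ℚ) (x - a).toNat (ifact (x - a))

lemma prod_monomial {ι : Type*} (s : Finset ι) (k : ι → ℕ) (c : ι → ℚ) :
    (∏ i ∈ s, monomial (R := ℚ) (k i) (c i)) = monomial (R := ℚ) (∑ i ∈ s, k i) (∏ i ∈ s, c i) := by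
  classical
  induction s using Finset.induction_on with
  | empty => simp
  | @insert a s ha ih =>
    rw [Finset.prod_insert ha, Finset.sum_insert ha, Finset.prod_insert ha, ih,
      monomial_mul_monomial']

lemma coeff_psi_mul (a b x : ℤ) (m : ℕ) :
    (coeff (R := ℚ) m) (psi a x * psi b x)
      = if m = (x - a).toNat + (x - b).toNat then ifact (x - a) * ifact (x - b) else 0 := by
  rw [psi, psi, monomial_mul_monomial', coeff_monomial]

lemma coeff_besselI_eq (a b N : ℤ) (hb : 1 ≤ b) (m : ℕ) (hN : b + m ≤ N) :
    (coeff (R := ℚ) m) (besselI (a - b))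
      = ∑ x ∈ Finset.Icc 1 N, (coeff (R := ℚ) m) (psi a x * psi b x) := by
  rw [besselI, coeff_mk, Finset.sum_congr rfl fun x _ => coeff_psi_mul a b x m]
  have hsub : Finset.Icc b (b + (m:ℤ)) ⊆ Finset.Icc 1 N := by
    intro x hx; rw [Finset.mem_Icc] at *; omega
  rw [← Finset.sum_subset hsub ?hvan]
  case hvan =>
    intro x hx hxn
    rw [Finset.mem_Icc] at hx hxn
    push_neg at hxn
    by_cases hxb : x < b
    · split_ifs with hcond
      · rw [ifact_of_neg (show x - b < 0 by omega), mul_zero]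
      · rfl
    · have hxm : b + (m:ℤ) < x := hxn (by omega)
      rw [if_neg (by omega)]
  refine Finset.sum_nbij' (fun k => b + (m:ℤ) - k) (fun x => (b + (m:ℤ) - x).toNat)
    ?_ ?_ ?_ ?_ ?_
  · intro k hk; rw [Finset.mem_range] at hk; rw [Finset.mem_Icc]; omega
  · intro x hx; rw [Finset.mem_Icc] at hx; rw [Finset.mem_range]; omega
  · intro k hk; rw [Finset.mem_range] at hk; omega
  · intro x hx; rw [Finset.mem_Icc] at hx; omega
  · intro k hk
    rw [Finset.mem_range] at hk
    by_cases hC : ((m - k : ℕ) : ℤ) - (k : ℤ) = a - b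
    · have hk' : (k:ℤ) ≤ (m:ℤ) := by omega
      have hxb : b + (m:ℤ) - k - b = ((m - k : ℕ) : ℤ) := by push_cast; omega
      have hxa : b + (m:ℤ) - k - a = (k : ℤ) := by omega
      rw [if_pos hC, if_pos (by omega), hxa, hxb, ifact_natCast, ifact_natCast]
      rw [one_div, mul_inv]
      ring
    · rw [if_neg hC]
      by_cases hC2 : m = (b + (m:ℤ) - k - a).toNat + (b + (m:ℤ) - k - b).toNat
      · rcases le_or_gt 0 (b + (m:ℤ) - k - a) with hxa | hxa
        · exfalso; apply hC; push_cast; omega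
        · rw [if_pos hC2, ifact_of_neg hxa, zero_mul]
      · rw [if_neg hC2]

lemma coeff_det_psi (a y : Fin d → ℤ) (m : ℕ) :
    (coeff (R := ℚ) m) (Matrix.det (Matrix.of fun i j : Fin d => psi (a j) (y i)))
      = if (m:ℤ) = (∑ i, y i) - ∑ i, a i then hdet d a y else 0 := by
  rw [Matrix.det_apply', map_sum, hdet, Matrix.det_apply']
  have key : ∀ σ : Equiv.Perm (Fin d),
      (coeff (R := ℚ) m) (((Equiv.Perm.sign σ : ℤ) : PowerSeries ℚ) * ∏ i : Fin d,
          (Matrix.of fun i j : Fin d => psi (a j) (y i)) (σ i) i)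
        = ((Equiv.Perm.sign σ : ℤ) : ℚ) *
            (if (m:ℤ) = (∑ i, y i) - ∑ i, a i then ∏ i, ifact (y (σ i) - a i) else 0) := by
    intro σ
    have hcast : ((Equiv.Perm.sign σ : ℤ) : PowerSeries ℚ)
        = PowerSeries.C (R := ℚ) ((Equiv.Perm.sign σ : ℤ) : ℚ) := (map_intCast (C (R := ℚ)) _).symm
    rw [hcast, coeff_C_mul]
    congr 1
    have hprod : (∏ i : Fin d, (Matrix.of fun i j : Fin d => psi (a j) (y i)) (σ i) i)
        = monomial (R := ℚ) (∑ i, (y (σ i) - a i).toNat) (∏ i, ifact (y (σ i) - a i)) := by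
      rw [show (∏ i : Fin d, (Matrix.of fun i j : Fin d => psi (a j) (y i)) (σ i) i)
          = ∏ i : Fin d, monomial (R := ℚ) ((y (σ i) - a i).toNat) (ifact (y (σ i) - a i)) from rfl,
        prod_monomial]
    rw [hprod, coeff_monomial]
    by_cases hneg : ∃ i, y (σ i) - a i < 0
    · obtain ⟨i0, hi0⟩ := hneg
      have hp0 : (∏ i, ifact (y (σ i) - a i)) = 0 :=
        Finset.prod_eq_zero (Finset.mem_univ i0) (ifact_of_neg hi0)
      rw [hp0]
      split_ifs <;> rfl
    · push_neg at hneg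
      have h2 : ((∑ i, (y (σ i) - a i).toNat : ℕ) : ℤ) = (∑ i, y i) - ∑ i, a i := by
        push_cast
        rw [Finset.sum_congr rfl fun i _ => Int.toNat_of_nonneg (hneg i),
          Finset.sum_sub_distrib, Equiv.sum_comp σ y]
      have hcond : (m = ∑ i, (y (σ i) - a i).toNat) ↔ ((m:ℤ) = (∑ i, y i) - ∑ i, a i) := by
        rw [← h2, Nat.cast_inj]
      rw [if_congr hcond rfl rfl]
  rw [Finset.sum_congr rfl fun σ _ => key σ]
  by_cases hC : (m:ℤ) = (∑ i, y i) - ∑ i, a i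
  · simp only [if_pos hC]
    exact Finset.sum_congr rfl fun σ _ => rfl
  · simp only [if_neg hC, mul_zero, Finset.sum_const_zero]

lemma coeff_mul_delta (m : ℕ) (P Q : PowerSeries ℚ) (u v : ℤ) (cP cQ : ℚ)
    (hP : ∀ p : ℕ, (coeff (R := ℚ) p) P = if (p:ℤ) = u then cP else 0)
    (hQ : ∀ q : ℕ, (coeff (R := ℚ) q) Q = if (q:ℤ) = v then cQ else 0) :
    (coeff (R := ℚ) m) (P * Q)
      = if ((m:ℤ) = u + v ∧ 0 ≤ u ∧ 0 ≤ v) then cP * cQ else 0 := by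
  rw [coeff_mul, Finset.sum_congr rfl fun x _ => by rw [hP x.1, hQ x.2]]
  by_cases h : (m:ℤ) = u + v ∧ 0 ≤ u ∧ 0 ≤ v
  · obtain ⟨h1, h2, h3⟩ := h
    rw [if_pos ⟨h1, h2, h3⟩, Finset.sum_eq_single (u.toNat, v.toNat)]
    · rw [if_pos (by omega), if_pos (by omega)]
    · rintro ⟨p, q⟩ hpq hne
      rw [Finset.HasAntidiagonal.mem_antidiagonal] at hpq
      by_cases hp : ((p:ℕ):ℤ) = u
      · by_cases hq : ((q:ℕ):ℤ) = v
        · exact absurd (Prod.ext (by omega) (by omega)) hne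
        · rw [if_neg hq, mul_zero]
      · rw [if_neg hp, zero_mul]
    · intro hnot
      exact absurd (Finset.HasAntidiagonal.mem_antidiagonal.2 (by omega)) hnot
  · rw [if_neg h]
    apply Finset.sum_eq_zero
    rintro ⟨p, q⟩ hpq
    rw [Finset.HasAntidiagonal.mem_antidiagonal] at hpq
    by_cases hp : ((p:ℕ):ℤ) = u
    · by_cases hq : ((q:ℕ):ℤ) = v
      · exact absurd ⟨by omega, by omega, by omega⟩ h
      · rw [if_neg hq, mul_zero]
    · rw [if_neg hp, zero_mul]

lemma dvd_det_sub {R : Type*} [CommRing R] (r : R) (A B : Matrix (Fin d) (Fin d) R)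
    (h : ∀ i j, r ∣ A i j - B i j) : r ∣ A.det - B.det := by
  have hAB : (Ideal.Quotient.mk (Ideal.span {r})).mapMatrix A
      = (Ideal.Quotient.mk (Ideal.span {r})).mapMatrix B := by
    ext i j
    simp only [RingHom.mapMatrix_apply, Matrix.map_apply]
    rw [Ideal.Quotient.eq]
    exact Ideal.mem_span_singleton.2 (h i j)
  have h2 := congrArg Matrix.det hAB
  rw [← RingHom.map_det, ← RingHom.map_det] at h2
  exact Ideal.mem_span_singleton.1 (Ideal.Quotient.eq.1 h2)

lemma SDec.lt_iff {y : Fin d → ℤ} (h : SDec y) {a b : Fin d} : y a < y b ↔ b < a := by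
  constructor
  · intro hab
    rcases lt_trichotomy a b with hlt | rfl | hlt
    · exact absurd (h a b hlt) (by omega)
    · omega
    · exact hlt
  · exact fun hba => h b a hba

end Series

section Master

open PowerSeries

variable {d : ℕ}

lemma perm_eq_refl_of_strictMono (ρ : Equiv.Perm (Fin d)) (h : StrictMono ⇑ρ) :
    ∀ x, ρ x = x := by
  have hr : Set.range ⇑ρ = Set.range (id : Fin d → Fin d) := by
    rw [Set.range_id, Set.range_eq_univ]
    exact ρ.surjective
  have := (h.range_inj strictMono_id).1 hr
  exact fun x => congrFun this x

open scoped Classical in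
lemma coeff_det_bessel (lam nu : Fin d → ℤ) (hlam : lam ∈ WeylChamber d)
    (hnu : nu ∈ WeylChamber d) (M : ℕ) :
    (PowerSeries.coeff (R := ℚ) M) (Matrix.det (Matrix.of fun i j : Fin d => besselI (lam i - nu j)))
      = ∑ y ∈ (Fintype.piFinset (fun _ : Fin d =>
            Finset.Icc (1:ℤ) ((M:ℤ) + (∑ i, lam i) + (∑ i, nu i)))).filter
            (fun y => SDec y ∧ 2 * ∑ i, y i = (M:ℤ) + (∑ i, lam i) + (∑ i, nu i)),
          hdet d lam y * hdet d nu y := by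
  set N : ℤ := (M:ℤ) + (∑ i, lam i) + (∑ i, nu i) with hNdef
  have hlam0 : (0:ℤ) ≤ ∑ i, lam i := Finset.sum_nonneg fun i _ => (hlam.2 i).le
  have hnu0 : (0:ℤ) ≤ ∑ i, nu i := Finset.sum_nonneg fun i _ => (hnu.2 i).le
  have hnu_le : ∀ j, nu j ≤ ∑ i, nu i := fun j =>
    Finset.single_le_sum (fun i _ => (hnu.2 i).le) (Finset.mem_univ j)
  -- Step A: truncate each entry
  have hA : (coeff (R := ℚ) M) (Matrix.det (Matrix.of fun i j : Fin d => besselI (lam i - nu j)))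
      = (coeff (R := ℚ) M) (Matrix.det (Matrix.of fun i j : Fin d =>
          ∑ x ∈ Finset.Icc (1:ℤ) N, psi (lam i) x * psi (nu j) x)) := by
    have hdvd : (X : PowerSeries ℚ)^(M+1) ∣
        (Matrix.det (Matrix.of fun i j : Fin d => besselI (lam i - nu j)))
        - (Matrix.det (Matrix.of fun i j : Fin d =>
            ∑ x ∈ Finset.Icc (1:ℤ) N, psi (lam i) x * psi (nu j) x)) := by
      apply dvd_det_sub
      intro i j
      rw [X_pow_dvd_iff]
      intro m hm
      rw [map_sub]
      have hb : (1:ℤ) ≤ nu j := hnu.2 j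
      have hbnd : nu j + (m:ℤ) ≤ N := by
        have := hnu_le j
        omega
      rw [show (Matrix.of fun i j : Fin d => besselI (lam i - nu j)) i j
          = besselI (lam i - nu j) from rfl,
        coeff_besselI_eq (lam i) (nu j) N hb m hbnd]
      rw [show (Matrix.of fun i j : Fin d =>
            ∑ x ∈ Finset.Icc (1:ℤ) N, psi (lam i) x * psi (nu j) x) i j
          = ∑ x ∈ Finset.Icc (1:ℤ) N, psi (lam i) x * psi (nu j) x from rfl]
      rw [map_sum, sub_self]
    have h0 := (X_pow_dvd_iff.1 hdvd) M (by omega)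
    rw [map_sub, sub_eq_zero] at h0
    exact h0
  rw [hA]
  -- Step B: multilinearity
  have hB : (Matrix.det (Matrix.of fun i j : Fin d =>
        ∑ x ∈ Finset.Icc (1:ℤ) N, psi (lam i) x * psi (nu j) x))
      = ∑ χ ∈ Fintype.piFinset (fun _ : Fin d => Finset.Icc (1:ℤ) N),
          (∏ i, psi (lam i) (χ i)) *
            Matrix.det (Matrix.of fun i j : Fin d => psi (nu j) (χ i)) := by
    have h1 : (Matrix.of fun i j : Fin d =>
          ∑ x ∈ Finset.Icc (1:ℤ) N, psi (lam i) x * psi (nu j) x)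
        = fun i => ∑ x ∈ Finset.Icc (1:ℤ) N, (fun j => psi (lam i) x * psi (nu j) x) := by
      funext i j
      rw [Finset.sum_apply]
      rfl
    calc (Matrix.det (Matrix.of fun i j : Fin d =>
          ∑ x ∈ Finset.Icc (1:ℤ) N, psi (lam i) x * psi (nu j) x))
        = (Matrix.detRowAlternating (R := PowerSeries ℚ)).toMultilinearMap
            (fun i => ∑ x ∈ Finset.Icc (1:ℤ) N, (fun j => psi (lam i) x * psi (nu j) x)) := by
          rw [show (Matrix.det (Matrix.of fun i j : Fin d =>
              ∑ x ∈ Finset.Icc (1:ℤ) N, psi (lam i) x * psi (nu j) x))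
            = (Matrix.detRowAlternating (R := PowerSeries ℚ)).toMultilinearMap
                (Matrix.of fun i j : Fin d =>
                  ∑ x ∈ Finset.Icc (1:ℤ) N, psi (lam i) x * psi (nu j) x) from rfl]
          rw [h1]
      _ = ∑ χ ∈ Fintype.piFinset (fun _ : Fin d => Finset.Icc (1:ℤ) N),
            (Matrix.detRowAlternating (R := PowerSeries ℚ)).toMultilinearMap
              (fun i => fun j => psi (lam i) (χ i) * psi (nu j) (χ i)) :=
          MultilinearMap.map_sum_finset _ _ _
      _ = ∑ χ ∈ Fintype.piFinset (fun _ : Fin d => Finset.Icc (1:ℤ) N),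
            (∏ i, psi (lam i) (χ i)) *
              Matrix.det (Matrix.of fun i j : Fin d => psi (nu j) (χ i)) := by
          refine Finset.sum_congr rfl fun χ _ => ?_
          rw [show (Matrix.detRowAlternating (R := PowerSeries ℚ)).toMultilinearMap
              (fun i => fun j => psi (lam i) (χ i) * psi (nu j) (χ i))
            = Matrix.det (Matrix.of fun i j : Fin d =>
                psi (lam i) (χ i) * psi (nu j) (χ i)) from rfl]
          exact Matrix.det_mul_column _ _
  rw [hB]
  -- Step C: only injective χ contribute
  have hC : ∑ χ ∈ Fintype.piFinset (fun _ : Fin d => Finset.Icc (1:ℤ) N),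
        (∏ i, psi (lam i) (χ i)) *
          Matrix.det (Matrix.of fun i j : Fin d => psi (nu j) (χ i))
      = ∑ χ ∈ (Fintype.piFinset (fun _ : Fin d => Finset.Icc (1:ℤ) N)).filter
            (fun χ => Function.Injective χ),
          (∏ i, psi (lam i) (χ i)) *
            Matrix.det (Matrix.of fun i j : Fin d => psi (nu j) (χ i)) := by
    rw [← Finset.sum_filter_add_sum_filter_not
      (Fintype.piFinset (fun _ : Fin d => Finset.Icc (1:ℤ) N))
      (fun χ => Function.Injective χ)]
    have hz : ∑ χ ∈ (Fintype.piFinset (fun _ : Fin d => Finset.Icc (1:ℤ) N)).filter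
          (fun χ => ¬ Function.Injective χ),
        (∏ i, psi (lam i) (χ i)) *
          Matrix.det (Matrix.of fun i j : Fin d => psi (nu j) (χ i)) = 0 := by
      apply Finset.sum_eq_zero
      intro χ hχ
      rw [Finset.mem_filter] at hχ
      obtain ⟨a, b, hab, hne⟩ := Function.not_injective_iff.1 hχ.2
      have hdet0 : Matrix.det (Matrix.of fun i j : Fin d => psi (nu j) (χ i)) = 0 := by
        apply Matrix.det_zero_of_row_eq hne
        funext j
        show psi (nu j) (χ a) = psi (nu j) (χ b)
        rw [hab]
      rw [hdet0, mul_zero]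
    rw [hz, add_zero]
  rw [hC]
  -- Step D: reindex by (sorted tuple, permutation)
  have hD : ∑ χ ∈ (Fintype.piFinset (fun _ : Fin d => Finset.Icc (1:ℤ) N)).filter
        (fun χ => Function.Injective χ),
        (∏ i, psi (lam i) (χ i)) *
          Matrix.det (Matrix.of fun i j : Fin d => psi (nu j) (χ i))
      = ∑ z ∈ ((Fintype.piFinset (fun _ : Fin d => Finset.Icc (1:ℤ) N)).filter
            (fun y => SDec y)) ×ˢ (Finset.univ : Finset (Equiv.Perm (Fin d))),
          (∏ i, psi (lam i) (z.1 (z.2 i))) *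
            Matrix.det (Matrix.of fun i j : Fin d => psi (nu j) (z.1 (z.2 i))) := by
    refine (Finset.sum_bij (fun z _ => fun k => z.1 (z.2 k)) ?_ ?_ ?_ ?_).symm
    · rintro ⟨y, τ⟩ hz
      rw [Finset.mem_product, Finset.mem_filter] at hz
      rw [Finset.mem_filter]
      constructor
      · rw [Fintype.mem_piFinset]
        intro k
        exact Fintype.mem_piFinset.1 hz.1.1 (τ k)
      · exact (hz.1.2.injective).comp τ.injective
    · rintro ⟨y, τ⟩ hz ⟨y', τ'⟩ hz' heq
      rw [Finset.mem_product, Finset.mem_filter] at hz hz'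
      have hy : SDec y := hz.1.2
      have hy' : SDec y' := hz'.1.2
      set ρ : Equiv.Perm (Fin d) := Equiv.trans τ'⁻¹ τ with hρdef
      have hyρ : ∀ x, y' x = y (ρ x) := by
        intro x
        have h1 := congrFun heq (τ'⁻¹ x)
        dsimp only at h1
        rw [Equiv.Perm.coe_inv, Equiv.apply_symm_apply] at h1
        exact h1.symm
      have hsm : StrictMono ⇑ρ := by
        intro x x' hxx'
        have h6 := hy' x x' hxx'
        rw [hyρ x, hyρ x'] at h6
        exact (hy.lt_iff).1 h6
      have hid := perm_eq_refl_of_strictMono ρ hsm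
      have hττ' : τ = τ' := by
        ext x
        have h3 := hid (τ' x)
        have h4 : ρ (τ' x) = τ x := by
          show τ (τ'⁻¹ (τ' x)) = τ x
          rw [Equiv.Perm.coe_inv, Equiv.symm_apply_apply]
        rw [h4] at h3
        exact congrArg Fin.val h3
      subst hττ'
      have hyy : y = y' := by
        funext k
        have h5 := congrFun heq (τ⁻¹ k)
        dsimp only at h5
        rw [Equiv.Perm.coe_inv, Equiv.apply_symm_apply] at h5
        exact h5
      rw [hyy]
    · intro χ hχ
      rw [Finset.mem_filter] at hχ
      have hsm : StrictMono (χ ∘ ⇑(Tuple.sort χ)) :=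
        (Tuple.monotone_sort χ).strictMono_of_injective
          (hχ.2.comp (Equiv.injective _))
      set π : Equiv.Perm (Fin d) := Equiv.trans Fin.revPerm (Tuple.sort χ) with hπdef
      have hySDec : SDec (fun k => χ (π k)) := by
        intro i j hij
        show (χ ∘ ⇑(Tuple.sort χ)) (Fin.rev j) < (χ ∘ ⇑(Tuple.sort χ)) (Fin.rev i)
        exact hsm (Fin.rev_lt_rev.2 hij)
      refine ⟨((fun k => χ (π k)), π⁻¹), ?_, ?_⟩
      · rw [Finset.mem_product, Finset.mem_filter]
        refine ⟨⟨?_, hySDec⟩, Finset.mem_univ _⟩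
        rw [Fintype.mem_piFinset]
        intro k
        exact Fintype.mem_piFinset.1 hχ.1 (π k)
      · funext x
        show χ (π (π⁻¹ x)) = χ x
        rw [Equiv.Perm.coe_inv, Equiv.apply_symm_apply]
    · rintro ⟨y, τ⟩ hz
      rfl
  rw [hD, Finset.sum_product]
  have hE : ∀ y : Fin d → ℤ,
      (∑ τ : Equiv.Perm (Fin d), (∏ i, psi (lam i) (y (τ i))) *
          Matrix.det (Matrix.of fun i j : Fin d => psi (nu j) (y (τ i))))
        = Matrix.det (Matrix.of fun i j : Fin d => psi (lam j) (y i)) *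
            Matrix.det (Matrix.of fun i j : Fin d => psi (nu j) (y i)) := by
    intro y
    have hsub : ∀ τ : Equiv.Perm (Fin d),
        (Matrix.of fun i j : Fin d => psi (nu j) (y (τ i)))
          = (Matrix.of fun i j : Fin d => psi (nu j) (y i)).submatrix ⇑τ id := by
      intro τ; ext i j; simp [Matrix.submatrix_apply]
    calc (∑ τ : Equiv.Perm (Fin d), (∏ i, psi (lam i) (y (τ i))) *
            Matrix.det (Matrix.of fun i j : Fin d => psi (nu j) (y (τ i))))
        = ∑ τ : Equiv.Perm (Fin d),
            (((Equiv.Perm.sign τ : ℤ) : PowerSeries ℚ) * ∏ i, psi (lam i) (y (τ i))) *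
              Matrix.det (Matrix.of fun i j : Fin d => psi (nu j) (y i)) := by
          refine Finset.sum_congr rfl fun τ _ => ?_
          rw [hsub τ, Matrix.det_permute]
          ring
      _ = (∑ τ : Equiv.Perm (Fin d),
            ((Equiv.Perm.sign τ : ℤ) : PowerSeries ℚ) * ∏ i, psi (lam i) (y (τ i))) *
              Matrix.det (Matrix.of fun i j : Fin d => psi (nu j) (y i)) := by
          rw [Finset.sum_mul]
      _ = Matrix.det (Matrix.of fun i j : Fin d => psi (lam j) (y i)) *
            Matrix.det (Matrix.of fun i j : Fin d => psi (nu j) (y i)) := by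
          rw [Matrix.det_apply' (Matrix.of fun i j : Fin d => psi (lam j) (y i))]
          rfl
  rw [Finset.sum_congr rfl fun y _ => hE y, map_sum]
  have hterm : ∀ y ∈ (Fintype.piFinset (fun _ : Fin d => Finset.Icc (1:ℤ) N)).filter
      (fun y => SDec y),
      (coeff (R := ℚ) M) (Matrix.det (Matrix.of fun i j : Fin d => psi (lam j) (y i)) *
          Matrix.det (Matrix.of fun i j : Fin d => psi (nu j) (y i)))
        = if 2 * ∑ i, y i = (M:ℤ) + (∑ i, lam i) + (∑ i, nu i) then
            hdet d lam y * hdet d nu y else 0 := by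
    intro y hy
    rw [Finset.mem_filter] at hy
    have hySDec : SDec y := hy.2
    rw [coeff_mul_delta M _ _ ((∑ i, y i) - ∑ i, lam i) ((∑ i, y i) - ∑ i, nu i)
      (hdet d lam y) (hdet d nu y) (fun p => coeff_det_psi lam y p)
      (fun q => coeff_det_psi nu y q)]
    by_cases hc : 2 * ∑ i, y i = (M:ℤ) + (∑ i, lam i) + (∑ i, nu i)
    · rw [if_pos hc]
      by_cases hu : 0 ≤ (∑ i, y i) - ∑ i, lam i
      · by_cases hv : 0 ≤ (∑ i, y i) - ∑ i, nu i
        · rw [if_pos ⟨by omega, hu, hv⟩]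
        · rw [if_neg (fun h => hv h.2.2)]
          have hblock : ∃ i, y i < nu i := by
            by_contra hno
            push_neg at hno
            exact hv (by
              have := Finset.sum_le_sum (fun i (_ : i ∈ Finset.univ) => hno i)
              omega)
          rw [hdet_block_zero (show SDec nu from hnu.1) hySDec hblock, mul_zero]
      · rw [if_neg (fun h => hu h.2.1)]
        have hblock : ∃ i, y i < lam i := by
          by_contra hno
          push_neg at hno
          exact hu (by
            have := Finset.sum_le_sum (fun i (_ : i ∈ Finset.univ) => hno i)
            omega)
        rw [hdet_block_zero (show SDec lam from hlam.1) hySDec hblock, zero_mul]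
    · rw [if_neg hc, if_neg (fun h => hc (by omega))]
  rw [Finset.sum_congr rfl hterm, ← Finset.sum_filter, Finset.filter_filter]


end Master



/-- For `λ, ν ∈ W^d` with `|λ| ≥ |ν|` and `D = |λ| - |ν|`,
`Σ_{n ≥ 0} u_d(λ;ν;n) t^{2n+D}/(n!(n+D)!) = det( I_{λ_i - ν_j}(2t) )_{1 ≤ i,j ≤ d}`:
coefficientwise, `u_d(λ;ν;n)` is `n!(n+D)!` times the coefficient of `t^{2n+D}` in
the determinant, and every coefficient of `t^m` with `m` not of the form `2n + D`
vanishes. -/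
theorem generalized_gessel_two_shapes (d : ℕ) (hd : 1 ≤ d) (lam nu : Fin d → ℤ)
    (hlam : lam ∈ WeylChamber d) (hnu : nu ∈ WeylChamber d)
    (hle : ∑ i, nu i ≤ ∑ i, lam i) :
    (∀ n : ℕ, (uPairCount₂ d lam nu n : ℚ) =
        (n.factorial : ℚ) *
          ((n + ((∑ i, lam i) - ∑ i, nu i).toNat).factorial : ℚ) *
          PowerSeries.coeff (R := ℚ) (2 * n + ((∑ i, lam i) - ∑ i, nu i).toNat)
            (Matrix.det (Matrix.of fun i j : Fin d => besselI (lam i - nu j)))) ∧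
      (∀ m : ℕ, (¬ ∃ n : ℕ, m = 2 * n + ((∑ i, lam i) - ∑ i, nu i).toNat) →
        PowerSeries.coeff (R := ℚ) m
          (Matrix.det (Matrix.of fun i j : Fin d => besselI (lam i - nu j))) = 0) := by
  classical
  have hlam0 : (0:ℤ) ≤ ∑ i, lam i := Finset.sum_nonneg fun i _ => (hlam.2 i).le
  have hnu0 : (0:ℤ) ≤ ∑ i, nu i := Finset.sum_nonneg fun i _ => (hnu.2 i).le
  have hlam_le : ∀ j, lam j ≤ ∑ i, lam i := fun j =>
    Finset.single_le_sum (fun i _ => (hlam.2 i).le) (Finset.mem_univ j)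
  set D : ℕ := ((∑ i, lam i) - ∑ i, nu i).toNat with hDdef
  have hD : (D:ℤ) = (∑ i, lam i) - ∑ i, nu i := Int.toNat_of_nonneg (by omega)
  constructor
  · intro n
    have hu : uPairCount₂ d lam nu n = Nat.card (PairSp d n (n + D) lam nu) := rfl
    rw [hu, pair_card_eq, coeff_det_bessel lam nu hlam hnu (2 * n + D)]
    set NM : ℤ := ((2 * n + D : ℕ) : ℤ) + (∑ i, lam i) + (∑ i, nu i) with hNMdef
    set SD : Finset (Fin d → ℤ) := (Fintype.piFinset (fun _ : Fin d =>
        Finset.Icc (1:ℤ) NM)).filter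
        (fun y => SDec y ∧ 2 * ∑ i, y i = NM) with hSDdef
    set B : Finset (Fin d → ℤ) :=
      Fintype.piFinset (fun i => Finset.Icc (lam i) (lam i + (n:ℤ))) with hBdef
    push_cast
    -- facts about membership
    have hSDmem : ∀ y ∈ SD, y ∈ WeylChamber d ∧ (∑ i, y i) = (∑ i, lam i) + n := by
      intro y hy
      rw [hSDdef, Finset.mem_filter, Fintype.mem_piFinset] at hy
      obtain ⟨hpi, hsd, hsum⟩ := hy
      have hpos : ∀ i, 0 < y i := fun i => by
        have := hpi i; rw [Finset.mem_Icc] at this; omega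
      refine ⟨⟨hsd, hpos⟩, ?_⟩
      rw [hNMdef] at hsum
      push_cast at hsum ⊢
      omega
    have hcard0 : ∀ y : Fin d → ℤ, y ∉ B → Nat.card (WalkSp d n lam y) = 0 := by
      intro y hyB
      by_contra hne
      obtain ⟨w⟩ := walk_nonempty_of_card_ne_zero hne
      obtain ⟨hW, hsum, hge⟩ := walk_facts w
      apply hyB
      rw [hBdef, Fintype.mem_piFinset]
      intro j
      rw [Finset.mem_Icc]
      refine ⟨hge j, ?_⟩
      have hsingle : y j - lam j ≤ ∑ i, (y i - lam i) := by
        apply Finset.single_le_sum (f := fun i => y i - lam i)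
        · intro i _; have := hge i; omega
        · exact Finset.mem_univ j
      rw [Finset.sum_sub_distrib] at hsingle
      omega
    have hBtoSD : ∀ y : Fin d → ℤ, y ∈ B → y ∉ SD →
        Nat.card (WalkSp d n lam y) = 0 ∨ Nat.card (WalkSp d (n + D) nu y) = 0 := by
      intro y hyB hySD
      by_contra hcon
      push_neg at hcon
      obtain ⟨w⟩ := walk_nonempty_of_card_ne_zero hcon.1
      obtain ⟨hW, hsum, hge⟩ := walk_facts w
      apply hySD
      rw [hSDdef, Finset.mem_filter, Fintype.mem_piFinset]
      refine ⟨fun k => ?_, hW.1, ?_⟩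
      · rw [Finset.mem_Icc]
        have h1 : 0 < y k := hW.2 k
        have h2 : y k ≤ lam k + n := by
          have := Fintype.mem_piFinset.1 hyB k
          rw [Finset.mem_Icc] at this
          exact this.2
        have h3 := hlam_le k
        rw [hNMdef]
        push_cast
        omega
      · rw [hNMdef]
        push_cast
        push_cast at hsum
        omega
    have hsumeq : (∑ μ ∈ B, (Nat.card (WalkSp d n lam μ) : ℚ) *
          (Nat.card (WalkSp d (n + D) nu μ) : ℚ))
        = ∑ μ ∈ SD, (Nat.card (WalkSp d n lam μ) : ℚ) *
            (Nat.card (WalkSp d (n + D) nu μ) : ℚ) := by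
      have hz1 : ∀ y ∈ (B ∪ SD) \ B, (Nat.card (WalkSp d n lam y) : ℚ) *
          (Nat.card (WalkSp d (n + D) nu y) : ℚ) = 0 := by
        intro y hy
        rw [Finset.mem_sdiff] at hy
        have hySD : y ∈ SD := by
          rcases Finset.mem_union.1 hy.1 with h | h
          · exact absurd h hy.2
          · exact h
        rw [hcard0 y hy.2]
        norm_num
      have hz2 : ∀ y ∈ (B ∪ SD) \ SD, (Nat.card (WalkSp d n lam y) : ℚ) *
          (Nat.card (WalkSp d (n + D) nu y) : ℚ) = 0 := by
        intro y hy
        rw [Finset.mem_sdiff] at hy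
        have hyB : y ∈ B := by
          rcases Finset.mem_union.1 hy.1 with h | h
          · exact h
          · exact absurd h hy.2
        rcases hBtoSD y hyB hy.2 with h | h
        · rw [h]; norm_num
        · rw [h]; norm_num
      have e1 := Finset.sum_subset_zero_on_sdiff (Finset.subset_union_left (s₂ := SD))
        hz1 (fun x (_ : x ∈ B) => rfl)
      have e2 := Finset.sum_subset_zero_on_sdiff (Finset.subset_union_right (s₁ := B))
        hz2 (fun x (_ : x ∈ SD) => rfl)
      rw [e1]
      exact e2.symm
    rw [hsumeq]
    rw [Finset.mul_sum]
    refine Finset.sum_congr rfl fun y hy => ?_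
    obtain ⟨hyW, hysum⟩ := hSDmem y hy
    rw [walk_card_eq_hdet hlam n y hyW hysum,
      walk_card_eq_hdet hnu (n + D) y hyW (by push_cast; omega)]
    ring
  · intro m hm
    rw [coeff_det_bessel lam nu hlam hnu m]
    apply Finset.sum_eq_zero
    intro y hy
    rw [Finset.mem_filter] at hy
    obtain ⟨hpi, hySDec, hysum⟩ := hy
    by_cases hbl : ∀ i, lam i ≤ y i
    · exfalso
      have hSle : (∑ i, lam i) ≤ ∑ i, y i := Finset.sum_le_sum fun i _ => hbl i
      exact hm ⟨((∑ i, y i) - ∑ i, lam i).toNat, by omega⟩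
    · push_neg at hbl
      obtain ⟨i, hi⟩ := hbl
      rw [hdet_block_zero (show SDec lam from hlam.1) hySDec ⟨i, hi⟩, zero_mul]
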